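/- Let z ∈ ℂ∖{0} and let α, β, F, G, H : ℤ → ℂ satisfy the stationary zero-curvature relations at z, with F(n) ≠ 0 for all n ∈ ℤ. Let w ∈ ℂ satisfy w² = G(n)² − F(n)H(n) for all n ∈ ℤ, and define φ(n) := (w + G(n))/F(n) and φ*(n) := (−w + G(n))/F(n). Then φ satisfies the Riccati-type equation α(n)φ(n)φ(n−1) − φ(n−1) + zφ(n) = zβ(n) for all n (and the same equation holds with φ replaced by φ*); moreover φ(n)φ*(n) = H(n)/F(n), φ(n) + φ*(n) = 2G(n)/F(n), φ(n) − φ*(n) = 2w/F(n), and whenever w − G(n) ≠ 0 one has φ(n) = −H(n)/(w − G(n)). -/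

import Mathlib

/-- The meromorphic function `φ(n) = (w + G(n))/F(n)`. -/
noncomputable def phiP (F G : ℤ → ℂ) (w : ℂ) (n : ℤ) : ℂ := (w + G n) / F n

/-- The function on the other sheet, `φ*(n) = (−w + G(n))/F(n)`. -/
noncomputable def phiM (F G : ℤ → ℂ) (w : ℂ) (n : ℤ) : ℂ := (-w + G n) / F n

/-- Properties of the fundamental meromorphic function `φ`: the Riccati-type
equation `αφφ⁻ − φ⁻ + zφ = zβ` (for `φ` and for `φ*`), together with
`φφ* = H/F`, `φ + φ* = 2G/F`, `φ − φ* = 2w/F`, and the alternative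
representation `φ = −H/(w − G)` whenever `w − G ≠ 0`. -/
theorem phi_identities (z : ℂ) (hz : z ≠ 0) (α β F G H : ℤ → ℂ)
    (h1 : ∀ n : ℤ, z * (G (n - 1) - G n) + z * β n * F n + α n * H (n - 1) = 0)
    (h2 : ∀ n : ℤ, z * β n * F (n - 1) + α n * H n - G n + G (n - 1) = 0)
    (h3 : ∀ n : ℤ, -F n + z * F (n - 1) + α n * (G n + G (n - 1)) = 0)
    (h4 : ∀ n : ℤ, z * β n * (G n + G (n - 1)) - z * H n + H (n - 1) = 0)
    (hF : ∀ n : ℤ, F n ≠ 0) (w : ℂ)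
    (hw : ∀ n : ℤ, w ^ 2 = G n ^ 2 - F n * H n) :
    (∀ n : ℤ, α n * phiP F G w n * phiP F G w (n - 1) - phiP F G w (n - 1)
        + z * phiP F G w n = z * β n)
    ∧ (∀ n : ℤ, α n * phiM F G w n * phiM F G w (n - 1) - phiM F G w (n - 1)
        + z * phiM F G w n = z * β n)
    ∧ (∀ n : ℤ, phiP F G w n * phiM F G w n = H n / F n)
    ∧ (∀ n : ℤ, phiP F G w n + phiM F G w n = 2 * G n / F n)
    ∧ (∀ n : ℤ, phiP F G w n - phiM F G w n = 2 * w / F n)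
    ∧ (∀ n : ℤ, w - G n ≠ 0 → phiP F G w n = -H n / (w - G n)) := by
  refine ⟨?_, ?_, ?_, ?_, ?_, ?_⟩
  · intro n
    have a := hF n; have b := hF (n-1)
    unfold phiP
    field_simp
    linear_combination ((α n) * hw n + (w + G n) * h3 n - F n * h2 n)
  · intro n
    have a := hF n; have b := hF (n-1)
    unfold phiM
    field_simp
    linear_combination ((α n) * hw n + (-w + G n) * h3 n - F n * h2 n)
  · intro n
    have a := hF n
    unfold phiP phiM
    field_simp
    linear_combination (-1 : ℂ) * hw n
  · intro n
    have a := hF n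
    unfold phiP phiM
    field_simp
    ring
  · intro n
    have a := hF n
    unfold phiP phiM
    field_simp
    ring
  · intro n hwG
    unfold phiP
    rw [div_eq_div_iff (hF n) hwG]
    linear_combination hw n
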